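/- Let P ∈ C[x,y] with deg_y P = r_P and deg_x P = d_P, and let R(x) = Res_y(P, P_y). If α is a root of R of multiplicity k, then the equation P(α, y) = 0 has at least r_P − 2k simple roots in C̄, and consequently P(x, g(x)) = 0 has at least r_P − 2k solutions g in the formal power series ring C̄[[x − α]]. -/

import Mathlib

/-- The Sylvester matrix of `p` (of degree `n`) and `q` (of degree `m`):
an `(m+n)×(m+n)` matrix whose first `m` columns are shifted coefficient
vectors of `p` and last `n` columns shifted coefficient vectors of `q`. -/
noncomputable def sylvesterMatrix {R : Type*} [CommRing R]
    (p q : Polynomial R) (n m : ℕ) : Matrix (Fin (m + n)) (Fin (m + n)) R :=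
  Matrix.of fun i j =>
    if (j : ℕ) < m then
      (if (j : ℕ) ≤ (i : ℕ) then p.coeff ((i : ℕ) - (j : ℕ)) else 0)
    else
      (if (j : ℕ) - m ≤ (i : ℕ) then q.coeff ((i : ℕ) - ((j : ℕ) - m)) else 0)

namespace Stmt7Aux

open Polynomial Matrix Module

/-! ### Extending a linearly independent family to a basis, with an apply lemma -/

noncomputable def myExtendBasis {F : Type*} [Field F] {V : Type*} [AddCommGroup V] [Module F V]
    {t : ℕ} (v : Fin t → V) (hv : LinearIndependent F v) :
    Basis (Fin t ⊕ (Basis.sumExtendIndex hv)) F V :=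
  Basis.sumExtend hv

theorem myExtendBasis_inl {F : Type*} [Field F] {V : Type*} [AddCommGroup V] [Module F V]
    {t : ℕ} (v : Fin t → V) (hv : LinearIndependent F v) (i : Fin t) :
    myExtendBasis v hv (Sum.inl i) = v i := by
  classical
  unfold myExtendBasis Basis.sumExtend
  simp only [Basis.reindex_apply, Equiv.symm_symm, Equiv.trans_apply, Equiv.sumCongr_apply,
    Sum.map_inl]
  erw [Basis.extend_apply_self]
  rfl

/-! ### If the evaluated matrix has a `t`-dimensional kernel, `(X-α)^t` divides the determinant -/

theorem det_dvd_of_ker {F : Type*} [Field F] {N t : ℕ}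
    (M : Matrix (Fin N) (Fin N) (Polynomial F)) (α : F)
    (v : Fin t → (Fin N → F)) (hv : LinearIndependent F v)
    (hker : ∀ e, (M.map (Polynomial.eval α)).mulVec (v e) = 0) :
    (X - Polynomial.C α) ^ t ∣ M.det := by
  classical
  set S := Basis.sumExtendIndex hv with hS
  let b0 : Basis (Fin t ⊕ S) F (Fin N → F) := myExtendBasis v hv
  haveI : Fintype (Fin t ⊕ S) := FiniteDimensional.fintypeBasisIndex b0
  haveI : Fintype S := Fintype.ofInjective (Sum.inr : S → Fin t ⊕ S) Sum.inr_injective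
  have hcard : Fintype.card (Fin t ⊕ S) = N := by
    have h1 := Module.finrank_eq_card_basis b0
    have h2 : Module.finrank F (Fin N → F) = N := by simp
    exact (h1.symm.trans h2)
  let σ : (Fin t ⊕ S) ≃ Fin N := (Fintype.equivFin _).trans (finCongr hcard)
  let b : Basis (Fin N) F (Fin N → F) := b0.reindex σ
  have hb : ∀ e : Fin t, b (σ (Sum.inl e)) = v e := by
    intro e
    simp only [b, Basis.reindex_apply, Equiv.symm_apply_apply]
    exact myExtendBasis_inl v hv e
  let U : Matrix (Fin N) (Fin N) F := Matrix.of fun i j => b j i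
  have hU : U = (Pi.basisFun F (Fin N)).toMatrix b := by
    ext i j
    simp [U, Basis.toMatrix_apply, Pi.basisFun_repr]
  have hUdet : IsUnit U.det := by
    have h1 : U * (b.toMatrix (Pi.basisFun F (Fin N))) = 1 := by
      rw [hU]; exact Basis.toMatrix_mul_toMatrix_flip _ _
    have := congrArg Matrix.det h1
    rw [Matrix.det_mul, Matrix.det_one] at this
    exact IsUnit.of_mul_eq_one _ this
  let A := M * (U.map Polynomial.C)
  have hroot : ∀ (i : Fin N) (e : Fin t), (A i (σ (Sum.inl e))).IsRoot α := by
    intro i e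
    have hc := congrFun (hker e) i
    simp only [Matrix.mulVec, dotProduct, Matrix.map_apply, Pi.zero_apply] at hc
    simp only [A, Matrix.mul_apply, Matrix.map_apply, Polynomial.IsRoot, Polynomial.eval_finset_sum,
      Polynomial.eval_mul, Polynomial.eval_C]
    rw [← hc]
    congr 1; funext l
    congr 1
    show b (σ (Sum.inl e)) l = v e l
    rw [hb]
  let pivots : Finset (Fin N) := Finset.univ.image (fun e => σ (Sum.inl e))
  have hpiv : pivots.card = t := by
    have hinj : Function.Injective (fun e : Fin t => σ (Sum.inl e)) :=
      fun a c h => Sum.inl_injective (σ.injective h)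
    rw [Finset.card_image_of_injective _ hinj, Finset.card_univ, Fintype.card_fin]
  let d : Fin N → Polynomial F := fun j => if j ∈ pivots then X - Polynomial.C α else 1
  have hdvd : ∀ i j, d j ∣ A i j := by
    intro i j
    by_cases hj : j ∈ pivots
    · simp only [d, if_pos hj]
      obtain ⟨e, -, rfl⟩ := Finset.mem_image.mp hj
      exact Polynomial.dvd_iff_isRoot.mpr (hroot i e)
    · simp [d, if_neg hj]
  let B : Matrix (Fin N) (Fin N) (Polynomial F) := Matrix.of fun i j => (hdvd i j).choose
  have hA : A = B * Matrix.diagonal d := by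
    apply Matrix.ext; intro i j
    rw [Matrix.mul_diagonal]
    have := (hdvd i j).choose_spec
    rw [this]; exact mul_comm _ _
  have hdetA : A.det = B.det * (X - Polynomial.C α) ^ t := by
    rw [hA, Matrix.det_mul, Matrix.det_diagonal]
    congr 1
    have : ∀ j, d j = if j ∈ pivots then (X - Polynomial.C α) else 1 := fun j => rfl
    rw [Finset.prod_congr rfl (fun j _ => this j), Finset.prod_ite_mem, Finset.univ_inter,
      Finset.prod_const, hpiv]
  have hdetA2 : A.det = M.det * Polynomial.C U.det := by
    rw [Matrix.det_mul]
    congr 1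
    rw [← RingHom.mapMatrix_apply, ← RingHom.map_det]
  have hdvddet : (X - Polynomial.C α) ^ t ∣ M.det * Polynomial.C U.det := by
    rw [← hdetA2, hdetA]; exact Dvd.intro_left _ rfl
  have hunit : IsUnit (Polynomial.C U.det) := hUdet.map Polynomial.C
  exact (IsUnit.dvd_mul_right hunit).mp hdvddet

/-! ### Sylvester matrix lemmas -/

theorem sylvesterMatrix_map {R S : Type*} [CommRing R] [CommRing S] (f : R →+* S)
    (p q : Polynomial R) (n m : ℕ) :
    (sylvesterMatrix p q n m).map f = sylvesterMatrix (p.map f) (q.map f) n m := by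
  apply Matrix.ext; intro i j
  simp only [sylvesterMatrix, Matrix.map_apply, Matrix.of_apply]
  split_ifs <;> simp [Polynomial.coeff_map]

theorem sum_coeff_aux {K : Type*} [CommRing K] (p A : Polynomial K) (i M' : ℕ)
    (hA : ∀ j, M' ≤ j → A.coeff j = 0) :
    ∑ j ∈ Finset.range M', (if j ≤ i then p.coeff (i - j) else 0) * A.coeff j
      = (A * p).coeff i := by
  have e1 : ∑ j ∈ Finset.range M', (if j ≤ i then p.coeff (i - j) else 0) * A.coeff j
      = ∑ j ∈ Finset.range (M' + (i + 1)), (if j ≤ i then p.coeff (i - j) else 0) * A.coeff j := by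
    apply Finset.sum_subset (Finset.range_subset_range.mpr (Nat.le_add_right _ _))
    intro j _ hj
    rw [hA j (by simpa using Finset.mem_range.not.mp hj), mul_zero]
  have e2 : ∑ j ∈ Finset.range (i + 1), (if j ≤ i then p.coeff (i - j) else 0) * A.coeff j
      = ∑ j ∈ Finset.range (M' + (i + 1)), (if j ≤ i then p.coeff (i - j) else 0) * A.coeff j := by
    apply Finset.sum_subset (Finset.range_subset_range.mpr (Nat.le_add_left _ _))
    intro j _ hj
    have : ¬ (j ≤ i) := by simpa using Finset.mem_range.not.mp hj
    rw [if_neg this, zero_mul]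
  rw [e1, ← e2]
  rw [Polynomial.coeff_mul, Finset.Nat.sum_antidiagonal_eq_sum_range_succ_mk]
  apply Finset.sum_congr rfl
  intro j hj
  have hji : j ≤ i := Nat.lt_succ_iff.mp (Finset.mem_range.mp hj)
  rw [if_pos hji]
  exact mul_comm _ _

theorem sylvester_mulVec {K : Type*} [CommRing K] (Q Q2 A B : Polynomial K) {n m : ℕ}
    (hA : ∀ j, m ≤ j → A.coeff j = 0) (hB : ∀ j, n ≤ j → B.coeff j = 0)
    (hAB : A * Q + B * Q2 = 0) :
    (sylvesterMatrix Q Q2 n m).mulVec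
      (fun j : Fin (m + n) => if (j : ℕ) < m then A.coeff (j : ℕ) else B.coeff ((j : ℕ) - m))
      = 0 := by
  funext i
  simp only [Matrix.mulVec, dotProduct, Pi.zero_apply]
  rw [Fin.sum_univ_add]
  have h1 : ∀ j : Fin m, (sylvesterMatrix Q Q2 n m) i (Fin.castAdd n j) *
      (if ((Fin.castAdd n j : Fin (m+n)) : ℕ) < m then A.coeff ((Fin.castAdd n j : Fin (m+n)) : ℕ)
        else B.coeff (((Fin.castAdd n j : Fin (m+n)) : ℕ) - m))
      = (if (j : ℕ) ≤ (i : ℕ) then Q.coeff ((i : ℕ) - (j : ℕ)) else 0) * A.coeff (j : ℕ) := by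
    intro j
    have hj : ((Fin.castAdd n j : Fin (m+n)) : ℕ) = (j : ℕ) := Fin.coe_castAdd n j
    simp only [sylvesterMatrix, Matrix.of_apply, hj, j.isLt, if_pos]
  have h2 : ∀ j : Fin n, (sylvesterMatrix Q Q2 n m) i (Fin.natAdd m j) *
      (if ((Fin.natAdd m j : Fin (m+n)) : ℕ) < m then A.coeff ((Fin.natAdd m j : Fin (m+n)) : ℕ)
        else B.coeff (((Fin.natAdd m j : Fin (m+n)) : ℕ) - m))
      = (if (j : ℕ) ≤ (i : ℕ) then Q2.coeff ((i : ℕ) - (j : ℕ)) else 0) * B.coeff (j : ℕ) := by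
    intro j
    have hj : ((Fin.natAdd m j : Fin (m+n)) : ℕ) = m + (j : ℕ) := Fin.coe_natAdd m j
    have hj2 : ¬ (m + (j : ℕ) < m) := by omega
    have hj3 : m + (j : ℕ) - m = (j : ℕ) := by omega
    simp only [sylvesterMatrix, Matrix.of_apply, hj, hj2, if_neg, if_false, hj3]
  rw [Finset.sum_congr rfl (fun j _ => h1 j), Finset.sum_congr rfl (fun j _ => h2 j),
    Fin.sum_univ_eq_sum_range (fun j => (if j ≤ (i:ℕ) then Q.coeff ((i:ℕ) - j) else 0) * A.coeff j),
    Fin.sum_univ_eq_sum_range (fun j => (if j ≤ (i:ℕ) then Q2.coeff ((i:ℕ) - j) else 0) * B.coeff j),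
    sum_coeff_aux Q A (i : ℕ) m hA, sum_coeff_aux Q2 B (i : ℕ) n hB]
  rw [← Polynomial.coeff_add, hAB, Polynomial.coeff_zero]

/-! ### Linear independence of coefficient vectors -/

theorem coeffVec_linind {K : Type*} [Field K] {t mm : ℕ} (A0 : Polynomial K) (hA0 : A0 ≠ 0)
    (h : t + A0.natDegree ≤ mm) :
    LinearIndependent K (fun (e : Fin t) (j : Fin mm) =>
      ((X : Polynomial K) ^ (e : ℕ) * A0).coeff (j : ℕ)) := by
  rcases Nat.eq_zero_or_pos t with ht | ht
  · subst ht
    exact linearIndependent_empty_type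
  rw [Fintype.linearIndependent_iff]
  intro g hg
  set F : Polynomial K := ∑ e : Fin t, Polynomial.C (g e) * X ^ (e : ℕ) with hF
  have hFdeg : F.natDegree ≤ t - 1 := by
    apply Polynomial.natDegree_sum_le_of_forall_le
    intro e _
    refine le_trans (Polynomial.natDegree_mul_le) ?_
    simp only [Polynomial.natDegree_C, Polynomial.natDegree_X_pow, zero_add]
    omega
  have hFA : F * A0 = 0 := by
    apply Polynomial.ext
    intro j
    rw [Polynomial.coeff_zero]
    by_cases hj : j < mm
    · have hco : (F * A0).coeff j
          = ∑ e : Fin t, g e * ((X : Polynomial K) ^ (e:ℕ) * A0).coeff j := by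
        rw [hF, Finset.sum_mul]
        rw [Polynomial.finset_sum_coeff]
        apply Finset.sum_congr rfl
        intro e _
        rw [mul_assoc, Polynomial.coeff_C_mul]
      rw [hco]
      have := congrFun hg ⟨j, hj⟩
      simpa using this
    · apply Polynomial.coeff_eq_zero_of_natDegree_lt
      calc (F * A0).natDegree ≤ F.natDegree + A0.natDegree := Polynomial.natDegree_mul_le
        _ < j := by omega
  have hF0 : F = 0 := (mul_eq_zero.mp hFA).resolve_right hA0
  intro e
  have : F.coeff (e : ℕ) = g e := by
    rw [hF, Polynomial.finset_sum_coeff]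
    rw [Finset.sum_eq_single e]
    · simp
    · intro e' _ hne
      rw [Polynomial.coeff_C_mul, Polynomial.coeff_X_pow, if_neg, mul_zero]
      intro hc
      exact hne (Fin.ext hc.symm)
    · intro hc
      exact absurd (Finset.mem_univ e) hc
  rw [← this, hF0, Polynomial.coeff_zero]

theorem vec_linind_A {K : Type*} [Field K] {t m n : ℕ} (A0 : Polynomial K) (hA0 : A0 ≠ 0)
    (h : t + A0.natDegree ≤ m) (Bf : Fin t → Polynomial K) :
    LinearIndependent K (fun (e : Fin t) (j : Fin (m + n)) =>
      if (j : ℕ) < m then ((X : Polynomial K) ^ (e : ℕ) * A0).coeff (j : ℕ)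
      else (Bf e).coeff ((j : ℕ) - m)) := by
  apply LinearIndependent.of_comp (LinearMap.funLeft K K (Fin.castAdd n : Fin m → Fin (m + n)))
  have heq : ((LinearMap.funLeft K K (Fin.castAdd n : Fin m → Fin (m + n))) ∘
      (fun (e : Fin t) (j : Fin (m + n)) =>
      if (j : ℕ) < m then ((X : Polynomial K) ^ (e : ℕ) * A0).coeff (j : ℕ)
      else (Bf e).coeff ((j : ℕ) - m)))
      = (fun (e : Fin t) (j : Fin m) => ((X : Polynomial K) ^ (e : ℕ) * A0).coeff (j : ℕ)) := by
    funext e j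
    simp only [Function.comp_apply, LinearMap.funLeft_apply, Fin.coe_castAdd]
    rw [if_pos j.isLt]
  rw [heq]
  exact coeffVec_linind A0 hA0 h

theorem vec_linind_B {K : Type*} [Field K] {t m n : ℕ} (B0 : Polynomial K) (hB0 : B0 ≠ 0)
    (h : t + B0.natDegree ≤ n) (Af : Fin t → Polynomial K) :
    LinearIndependent K (fun (e : Fin t) (j : Fin (m + n)) =>
      if (j : ℕ) < m then (Af e).coeff (j : ℕ)
      else ((X : Polynomial K) ^ (e : ℕ) * B0).coeff ((j : ℕ) - m)) := by
  apply LinearIndependent.of_comp (LinearMap.funLeft K K (Fin.natAdd m : Fin n → Fin (m + n)))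
  have heq : ((LinearMap.funLeft K K (Fin.natAdd m : Fin n → Fin (m + n))) ∘
      (fun (e : Fin t) (j : Fin (m + n)) =>
      if (j : ℕ) < m then (Af e).coeff (j : ℕ)
      else ((X : Polynomial K) ^ (e : ℕ) * B0).coeff ((j : ℕ) - m)))
      = (fun (e : Fin t) (j : Fin n) => ((X : Polynomial K) ^ (e : ℕ) * B0).coeff (j : ℕ)) := by
    funext e j
    simp only [Function.comp_apply, LinearMap.funLeft_apply, Fin.coe_natAdd]
    rw [if_neg (by omega)]
    congr 1
    omega
  rw [heq]
  exact coeffVec_linind B0 hB0 h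

/-! ### Hensel / Newton lifting in power series -/

theorem cc_eval {K : Type*} [Field K] (f : Polynomial (PowerSeries K)) (a : PowerSeries K) :
    PowerSeries.constantCoeff (R := K) (f.eval a)
      = (f.map (PowerSeries.constantCoeff (R := K))).eval (PowerSeries.constantCoeff (R := K) a) := by
  rw [Polynomial.eval_map]
  rw [show f.eval a = f.eval₂ (RingHom.id _) a from rfl]
  rw [Polynomial.hom_eval₂]
  rfl

theorem newton_lift {K : Type*} [Field K] (f : Polynomial (PowerSeries K)) (β : K)
    (h0 : (f.map (PowerSeries.constantCoeff (R := K))).eval β = 0)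
    (h1 : ((f.map (PowerSeries.constantCoeff (R := K))).derivative).eval β ≠ 0) :
    ∃ g : PowerSeries K, PowerSeries.constantCoeff (R := K) g = β ∧ f.eval g = 0 := by
  let step : PowerSeries K → PowerSeries K :=
    fun p => p - f.eval p * (f.derivative.eval p)⁻¹
  let a : ℕ → PowerSeries K := fun nn => Nat.rec (PowerSeries.C (R := K) β) (fun _ prev => step prev) nn
  have ha0 : a 0 = PowerSeries.C (R := K) β := rfl
  have haS : ∀ nn, a (nn + 1) = step (a nn) := fun _ => rfl
  have hinv : ∀ nn, PowerSeries.constantCoeff (R := K) (a nn) = β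
      ∧ (PowerSeries.X : PowerSeries K) ^ (nn + 1) ∣ f.eval (a nn) := by
    intro nn
    induction nn with
    | zero =>
      constructor
      · rw [ha0, PowerSeries.constantCoeff_C]
      · rw [pow_one, PowerSeries.X_dvd_iff, cc_eval, ha0, PowerSeries.constantCoeff_C, h0]
    | succ nn ih =>
      obtain ⟨ihc, ihd⟩ := ih
      have hccder : PowerSeries.constantCoeff (R := K) (f.derivative.eval (a nn)) ≠ 0 := by
        rw [cc_eval, ihc, ← Polynomial.derivative_map]
        exact h1
      have hu : f.derivative.eval (a nn) * (f.derivative.eval (a nn))⁻¹ = 1 :=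
        PowerSeries.mul_inv_cancel _ hccder
      set h : PowerSeries K := -(f.eval (a nn) * (f.derivative.eval (a nn))⁻¹) with hh
      have hstep : a (nn + 1) = a nn + h := by
        rw [haS, hh]
        show a nn - _ = _
        rw [sub_eq_add_neg]
      have hXh : (PowerSeries.X : PowerSeries K) ^ (nn + 1) ∣ h := by
        rw [hh]; exact (ihd.mul_right _).neg_right
      have hcch : PowerSeries.constantCoeff (R := K) h = 0 := by
        rw [← PowerSeries.X_dvd_iff]
        exact dvd_trans (dvd_pow_self _ (Nat.succ_ne_zero nn)) hXh
      constructor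
      · rw [hstep, map_add, ihc, hcch, add_zero]
      · obtain ⟨kk, hkk⟩ := f.binomExpansion (a nn) h
        rw [hstep, hkk]
        have hder : f.derivative.eval (a nn) * h = -(f.eval (a nn)) := by
          rw [hh, mul_neg]
          congr 1
          calc f.derivative.eval (a nn) * (f.eval (a nn) * (f.derivative.eval (a nn))⁻¹)
              = f.eval (a nn) * (f.derivative.eval (a nn) * (f.derivative.eval (a nn))⁻¹) := by
                ring
            _ = f.eval (a nn) := by rw [hu, mul_one]
        have hcanc : f.eval (a nn) + f.derivative.eval (a nn) * h = 0 := by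
          rw [hder, add_neg_cancel]
        rw [hcanc, zero_add]
        have h2 : (PowerSeries.X : PowerSeries K) ^ (2 * (nn + 1)) ∣ h ^ 2 := by
          rw [show (2 : ℕ) * (nn + 1) = (nn + 1) * 2 from by ring, pow_mul]
          exact pow_dvd_pow_of_dvd hXh 2
        exact dvd_trans (pow_dvd_pow _ (by omega)) (h2.mul_left kk)
  let g : PowerSeries K := PowerSeries.mk fun nn => PowerSeries.coeff (R := K) nn (a nn)
  have hcauchy : ∀ nn mm : ℕ, nn ≤ mm →
      (PowerSeries.X : PowerSeries K) ^ (nn + 1) ∣ (a mm - a nn) := by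
    intro nn mm hnm
    induction mm, hnm using Nat.le_induction with
    | base => rw [sub_self]; exact dvd_zero _
    | succ mm hnm ih =>
      have hstep : (PowerSeries.X : PowerSeries K) ^ (mm + 1) ∣ (a (mm + 1) - a mm) := by
        rw [haS]
        show _ ∣ a mm - _ - a mm
        rw [sub_sub_cancel_left]
        exact ((hinv mm).2.mul_right _).neg_right
      have : a (mm + 1) - a nn = (a (mm + 1) - a mm) + (a mm - a nn) := by ring
      rw [this]
      exact dvd_add (dvd_trans (pow_dvd_pow _ (by omega)) hstep) ih
  have hgam : ∀ mm, (PowerSeries.X : PowerSeries K) ^ (mm + 1) ∣ (g - a mm) := by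
    intro mm
    rw [PowerSeries.X_pow_dvd_iff]
    intro d hd
    rw [map_sub]
    have h3 : PowerSeries.coeff (R := K) d g = PowerSeries.coeff (R := K) d (a d) := PowerSeries.coeff_mk _ _
    have h4 : PowerSeries.coeff (R := K) d (a mm) = PowerSeries.coeff (R := K) d (a d) := by
      have h5 := hcauchy d mm (by omega)
      rw [PowerSeries.X_pow_dvd_iff] at h5
      have h6 := h5 d (by omega)
      rw [map_sub] at h6
      exact sub_eq_zero.mp h6
    rw [h3, h4, sub_self]
  refine ⟨g, ?_, ?_⟩
  · have h7 : PowerSeries.constantCoeff (R := K) g = PowerSeries.coeff (R := K) 0 g :=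
      (PowerSeries.coeff_zero_eq_constantCoeff (R := K)).symm ▸ rfl
    rw [h7, PowerSeries.coeff_mk, ha0]
    rw [show ((PowerSeries.coeff (R := K) 0) ((PowerSeries.C (R := K)) β)) = β from by simp]
  · apply PowerSeries.ext
    intro nn
    rw [map_zero]
    have h8 : (PowerSeries.X : PowerSeries K) ^ (nn + 1) ∣ f.eval g := by
      have h9 : f.eval g = (f.eval g - f.eval (a nn)) + f.eval (a nn) := by ring
      rw [h9]
      refine dvd_add (dvd_trans (hgam nn) (Polynomial.sub_dvd_eval_sub _ _ _)) (hinv nn).2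
    rw [PowerSeries.X_pow_dvd_iff] at h8
    exact h8 nn (by omega)

end Stmt7Aux

open Polynomial Stmt7Aux in
/-- If `α` is a root of multiplicity `k` of `R = Res_y(P,P_y)`, then `P(α,y)=0`
has at least `r_P - 2k` simple roots in `K = C̄`, and consequently
`P(x,g(x)) = 0` has at least `r_P - 2k` solutions `g ∈ K[[x-α]]` (realized by
substituting `x ↦ α + X`). -/
theorem stmt7 {C K : Type*} [Field C] [CharZero C] [Field K] [IsAlgClosed K]
    [Algebra C K]
    (P : Polynomial (Polynomial C)) (rP dP : ℕ)
    (hrP : P.natDegree = rP) (hrP1 : 1 ≤ rP)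
    (hdP : ∀ i, (P.coeff i).natDegree ≤ dP)
    (hsf : Squarefree (P.map (algebraMap (Polynomial C) (RatFunc C))))
    (hnof : ∀ q : Polynomial K, 0 < q.natDegree →
      ¬ (q.map (Polynomial.C : K →+* Polynomial K)
          ∣ P.map (Polynomial.mapRingHom (algebraMap C K))))
    (R : Polynomial C)
    (hR : R = (sylvesterMatrix P (Polynomial.derivative P) rP (rP - 1)).det)
    (hR0 : R ≠ 0)
    (α : K) (k : ℕ)
    (hk : (R.map (algebraMap C K)).rootMultiplicity α = k) :
    rP - 2 * k ≤
      {β : K | Polynomial.eval β (P.map ((Polynomial.aeval α).toRingHom : Polynomial C →+* K)) = 0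
        ∧ Polynomial.eval β (Polynomial.derivative
            (P.map ((Polynomial.aeval α).toRingHom : Polynomial C →+* K))) ≠ 0}.ncard
    ∧ ∃ T : Finset (PowerSeries K), rP - 2 * k ≤ T.card ∧
        ∀ g ∈ T, Polynomial.eval g (P.map
          (((Polynomial.aeval (PowerSeries.C (R := K) α + PowerSeries.X) :
              Polynomial C →ₐ[C] PowerSeries K)).toRingHom)) = 0 := by
  classical
  haveI : CharZero K := charZero_of_injective_algebraMap (algebraMap C K).injective
  set Q : Polynomial K :=
    P.map ((Polynomial.aeval α).toRingHom : Polynomial C →+* K) with hQdef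
  set PK : Polynomial (Polynomial K) := P.map (Polynomial.mapRingHom (algebraMap C K)) with hPKdef
  set MX : Matrix (Fin ((rP - 1) + rP)) (Fin ((rP - 1) + rP)) (Polynomial K) :=
    sylvesterMatrix PK (Polynomial.derivative PK) rP (rP - 1) with hMXdef
  have hRmap : R.map (algebraMap C K) = MX.det := by
    have h2 := RingHom.map_det (Polynomial.mapRingHom (algebraMap C K))
      (sylvesterMatrix P (Polynomial.derivative P) rP (rP - 1))
    rw [RingHom.mapMatrix_apply, sylvesterMatrix_map] at h2
    have h3 : R.map (algebraMap C K)
        = (Polynomial.mapRingHom (algebraMap C K)) R := rfl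
    rw [h3, hR, h2, hMXdef, hPKdef]
    congr 1
    rw [Polynomial.derivative_map]
  have hRK0 : R.map (algebraMap C K) ≠ 0 :=
    (Polynomial.map_ne_zero_iff (algebraMap C K).injective).mpr hR0
  have hPKQ : PK.map (Polynomial.evalRingHom α) = Q := by
    rw [hPKdef, Polynomial.map_map, hQdef]
    congr 1
    apply Polynomial.ringHom_ext <;> simp
  have hQspec : MX.map (Polynomial.eval α)
      = sylvesterMatrix Q (Polynomial.derivative Q) rP (rP - 1) := by
    have h1 := sylvesterMatrix_map (Polynomial.evalRingHom α) PK (Polynomial.derivative PK)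
      rP (rP - 1)
    rw [Polynomial.coe_evalRingHom] at h1
    have hder : (Polynomial.derivative PK).map (Polynomial.evalRingHom α)
        = Polynomial.derivative Q := by
      rw [← Polynomial.derivative_map, hPKQ]
    rw [hMXdef, h1, hPKQ, hder]
  -- key bound : any linearly independent family in the kernel bounds k from below
  have key : ∀ (t : ℕ) (v : Fin t → (Fin ((rP - 1) + rP) → K)),
      LinearIndependent K v →
      (∀ e, (sylvesterMatrix Q (Polynomial.derivative Q) rP (rP - 1)).mulVec (v e) = 0) →
      t ≤ k := by
    intro t v hv hker
    have hd := det_dvd_of_ker MX α v hv (by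
      intro e
      rw [hQspec]
      exact hker e)
    rw [← hRmap] at hd
    rw [← hk]
    exact (Polynomial.le_rootMultiplicity_iff hRK0).mpr hd
  -- trivial-case finisher
  have finish_trivial : rP ≤ 2 * k →
      (rP - 2 * k ≤
      {β : K | Polynomial.eval β Q = 0
        ∧ Polynomial.eval β (Polynomial.derivative Q) ≠ 0}.ncard
      ∧ ∃ T : Finset (PowerSeries K), rP - 2 * k ≤ T.card ∧
        ∀ g ∈ T, Polynomial.eval g (P.map
          (((Polynomial.aeval (PowerSeries.C (R := K) α + PowerSeries.X) :
              Polynomial C →ₐ[C] PowerSeries K)).toRingHom)) = 0) := by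
    intro hle
    have h0 : rP - 2 * k = 0 := by omega
    constructor
    · rw [h0]; exact Nat.zero_le _
    · exact ⟨∅, by rw [h0]; exact Nat.zero_le _, by intro g hg; exact absurd hg (by simp)⟩
  by_cases hQ0 : Q = 0
  · -- the specialized polynomial vanishes entirely: the sylvester matrix is 0
    apply finish_trivial
    have hz : sylvesterMatrix Q (Polynomial.derivative Q) rP (rP - 1) = 0 := by
      apply Matrix.ext; intro i j
      simp [sylvesterMatrix, hQ0]
    have ht := key ((rP - 1) + rP) (Pi.basisFun K (Fin ((rP - 1) + rP)))
      (Pi.basisFun K (Fin ((rP - 1) + rP))).linearIndependent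
      (by intro e; rw [hz]; exact Matrix.zero_mulVec _)
    omega
  by_cases hn'0 : Q.natDegree = 0
  · -- Q is a nonzero constant, its derivative is 0
    apply finish_trivial
    have hQC : Q = Polynomial.C (Q.coeff 0) := Polynomial.eq_C_of_natDegree_eq_zero hn'0
    have hQ' : Polynomial.derivative Q = 0 := by rw [hQC]; exact Polynomial.derivative_C
    have hv := vec_linind_B (K := K) (t := rP) (m := rP - 1) (n := rP)
      (1 : Polynomial K) one_ne_zero (by simp) (fun _ => 0)
    have hker : ∀ e : Fin rP,
        (sylvesterMatrix Q (Polynomial.derivative Q) rP (rP - 1)).mulVec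
          (fun j : Fin ((rP - 1) + rP) =>
            if (j : ℕ) < rP - 1 then (0 : Polynomial K).coeff (j : ℕ)
            else ((X : Polynomial K) ^ (e : ℕ) * 1).coeff ((j : ℕ) - (rP - 1))) = 0 := by
      intro e
      apply sylvester_mulVec Q (Polynomial.derivative Q) 0 ((X : Polynomial K) ^ (e : ℕ) * 1)
      · intro j _; simp
      · intro j hj
        apply Polynomial.coeff_eq_zero_of_natDegree_lt
        have := Polynomial.natDegree_mul_le (p := (X : Polynomial K) ^ (e : ℕ)) (q := 1)
        have he : ((X : Polynomial K) ^ (e : ℕ)).natDegree = (e : ℕ) :=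
          Polynomial.natDegree_X_pow _
        have : ((X : Polynomial K) ^ (e : ℕ) * 1).natDegree ≤ (e : ℕ) := by
          simpa [he] using this
        have he2 : (e : ℕ) < rP := e.isLt
        omega
      · rw [hQ', mul_zero, zero_mul, add_zero]
    have ht := key rP _ hv hker
    omega
  -- main case : Q ≠ 0 and deg Q ≥ 1
  have hn'pos : 1 ≤ Q.natDegree := by omega
  set n' : ℕ := Q.natDegree with hn'def
  set Q' : Polynomial K := Polynomial.derivative Q with hQ'def
  have hQ'0 : Q' ≠ 0 := by
    intro h
    have := Polynomial.natDegree_eq_zero_of_derivative_eq_zero h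
    omega
  have hn'rP : n' ≤ rP := by
    rw [hn'def, hQdef, ← hrP]
    exact Polynomial.natDegree_map_le
  set rts : Multiset K := Q.roots with hrtsdef
  have hrtscard : Multiset.card rts = n' :=
    Polynomial.splits_iff_card_roots.mp (IsAlgClosed.splits Q)
  set D : Finset K := rts.toFinset with hDdef
  have hDcn : D.card ≤ n' := by
    rw [← hrtscard]; exact Multiset.toFinset_card_le _
  have hDc1 : 1 ≤ D.card := by
    have hdeg0 : Q.degree ≠ 0 := by
      intro h
      rw [Polynomial.degree_eq_natDegree hQ0] at h
      exact absurd (by exact_mod_cast h) (by omega)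
    obtain ⟨β₀, hβ₀⟩ := IsAlgClosed.exists_root Q hdeg0
    refine Finset.card_pos.mpr ⟨β₀, ?_⟩
    rw [hDdef, Multiset.mem_toFinset, hrtsdef, Polynomial.mem_roots hQ0]
    exact hβ₀
  -- the common divisor G of Q and Q'
  set W : Multiset K := rts - rts.dedup with hWdef
  have hWle : W ≤ rts := tsub_le_self
  have hWcard : Multiset.card W = n' - D.card := by
    rw [hWdef, Multiset.card_sub (Multiset.dedup_le _), hrtscard]
    congr 1
  set G : Polynomial K := (W.map (fun β => X - Polynomial.C β)).prod with hGdef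
  have hGmonic : G.Monic :=
    Polynomial.monic_multiset_prod_of_monic _ _ (fun β _ => Polynomial.monic_X_sub_C β)
  have hG0 : G ≠ 0 := hGmonic.ne_zero
  have hGdeg : G.natDegree = n' - D.card := by
    rw [hGdef, Polynomial.natDegree_multiset_prod_X_sub_C_eq_card, hWcard]
  have hGQ : G ∣ Q := by
    refine dvd_trans ?_ (Polynomial.prod_multiset_X_sub_C_dvd Q)
    exact Multiset.prod_dvd_prod_of_le (Multiset.map_le_map hWle)
  have hWQ' : W ≤ Q'.roots := by
    rw [Multiset.le_iff_count]
    intro β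
    rw [hWdef, Multiset.count_sub]
    by_cases hβ : β ∈ rts
    · have hroot : Q.IsRoot β := (Polynomial.mem_roots hQ0).mp hβ
      have e1 : Multiset.count β rts.dedup = 1 := by rw [Multiset.count_dedup, if_pos hβ]
      have e2 : Multiset.count β rts = Polynomial.rootMultiplicity β Q := Polynomial.count_roots Q
      have e3 : Multiset.count β Q'.roots = Polynomial.rootMultiplicity β Q' :=
        Polynomial.count_roots Q'
      have e4 : Polynomial.rootMultiplicity β Q' = Polynomial.rootMultiplicity β Q - 1 := by
        rw [hQ'def]; exact Polynomial.derivative_rootMultiplicity_of_root hroot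
      omega
    · have h5 : Multiset.count β rts = 0 := Multiset.count_eq_zero.mpr hβ
      rw [h5]
      simp
  have hGQ' : G ∣ Q' := by
    refine dvd_trans ?_ (Polynomial.prod_multiset_X_sub_C_dvd Q')
    exact Multiset.prod_dvd_prod_of_le (Multiset.map_le_map hWQ')
  set A0 : Polynomial K := Q' / G with hA0def
  set B0 : Polynomial K := Q / G with hB0def
  have hA0 : G * A0 = Q' := EuclideanDomain.mul_div_cancel' hG0 hGQ'
  have hB0 : G * B0 = Q := EuclideanDomain.mul_div_cancel' hG0 hGQ
  have hA00 : A0 ≠ 0 := by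
    intro h
    exact hQ'0 (by rw [← hA0, h, mul_zero])
  have hB00 : B0 ≠ 0 := by
    intro h
    exact hQ0 (by rw [← hB0, h, mul_zero])
  have hdegA0 : G.natDegree + A0.natDegree = Q'.natDegree := by
    rw [← Polynomial.natDegree_mul hG0 hA00, hA0]
  have hdegB0 : G.natDegree + B0.natDegree = n' := by
    rw [← Polynomial.natDegree_mul hG0 hB00, hB0]
  have hQ'le : Q'.natDegree ≤ n' - 1 := by
    rw [hQ'def]
    exact Polynomial.natDegree_derivative_le Q
  set t : ℕ := rP - D.card with htdef
  -- the kernel vectors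
  have hId : A0 * Q - B0 * Q' = 0 := by
    have h1 : G * (A0 * Q) = G * (B0 * Q') := by
      rw [← mul_assoc, ← mul_assoc, hA0, hB0]
      ring
    have := mul_left_cancel₀ hG0 h1
    rw [this, sub_self]
  have hdegbound : t + A0.natDegree ≤ rP - 1 := by omega
  have hv := vec_linind_A (K := K) (t := t) (m := rP - 1) (n := rP) A0 hA00 hdegbound
    (fun e => -((X : Polynomial K) ^ (e : ℕ) * B0))
  have hker : ∀ e : Fin t,
      (sylvesterMatrix Q (Polynomial.derivative Q) rP (rP - 1)).mulVec
        (fun j : Fin ((rP - 1) + rP) =>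
          if (j : ℕ) < rP - 1 then ((X : Polynomial K) ^ (e : ℕ) * A0).coeff (j : ℕ)
          else (-((X : Polynomial K) ^ (e : ℕ) * B0)).coeff ((j : ℕ) - (rP - 1))) = 0 := by
    intro e
    apply sylvester_mulVec Q (Polynomial.derivative Q)
      ((X : Polynomial K) ^ (e : ℕ) * A0) (-((X : Polynomial K) ^ (e : ℕ) * B0))
    · intro j hj
      apply Polynomial.coeff_eq_zero_of_natDegree_lt
      have h1 : ((X : Polynomial K) ^ (e : ℕ) * A0).natDegree ≤ (e : ℕ) + A0.natDegree := by
        have := Polynomial.natDegree_mul_le (p := (X : Polynomial K) ^ (e : ℕ)) (q := A0)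
        simpa [Polynomial.natDegree_X_pow] using this
      have he2 : (e : ℕ) < t := e.isLt
      omega
    · intro j hj
      rw [Polynomial.coeff_neg]
      rw [Polynomial.coeff_eq_zero_of_natDegree_lt, neg_zero]
      have h1 : ((X : Polynomial K) ^ (e : ℕ) * B0).natDegree ≤ (e : ℕ) + B0.natDegree := by
        have := Polynomial.natDegree_mul_le (p := (X : Polynomial K) ^ (e : ℕ)) (q := B0)
        simpa [Polynomial.natDegree_X_pow] using this
      have he2 : (e : ℕ) < t := e.isLt
      omega
    · have : ((X : Polynomial K) ^ (e : ℕ) * A0) * Q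
          + (-((X : Polynomial K) ^ (e : ℕ) * B0)) * Polynomial.derivative Q
          = (X : Polynomial K) ^ (e : ℕ) * (A0 * Q - B0 * Q') := by
        rw [hQ'def]; ring
      rw [this, hId, mul_zero]
  have htk : t ≤ k := key t _ hv hker
  -- counting simple roots
  set sF : Finset K := D.filter (fun β => Polynomial.rootMultiplicity β Q = 1) with hsFdef
  have hset_eq : {β : K | Polynomial.eval β Q = 0
      ∧ Polynomial.eval β (Polynomial.derivative Q) ≠ 0} = (↑sF : Set K) := by
    ext β
    simp only [Set.mem_setOf_eq, Finset.coe_filter, hsFdef, Set.mem_setOf_eq,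
      Finset.mem_filter]
    constructor
    · rintro ⟨h1, h2⟩
      have hroot : Q.IsRoot β := h1
      have hmem : β ∈ D := by
        rw [hDdef, Multiset.mem_toFinset, hrtsdef, Polynomial.mem_roots hQ0]; exact hroot
      refine ⟨hmem, ?_⟩
      have hpos : 0 < Polynomial.rootMultiplicity β Q :=
        (Polynomial.rootMultiplicity_pos hQ0).mpr hroot
      by_contra hne
      have h2' : Q'.IsRoot β := by
        rw [hQ'def] at *
        have : 0 < Polynomial.rootMultiplicity β (Polynomial.derivative Q) := by
          rw [Polynomial.derivative_rootMultiplicity_of_root hroot]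
          omega
        exact (Polynomial.rootMultiplicity_pos hQ'0).mp this
      exact h2 h2'
    · rintro ⟨hmem, hrm⟩
      have hroot : Q.IsRoot β :=
        (Polynomial.rootMultiplicity_pos hQ0).mp (by omega)
      refine ⟨hroot, ?_⟩
      intro hc
      have h2' : Q'.IsRoot β := hc
      have : 0 < Polynomial.rootMultiplicity β Q' :=
        (Polynomial.rootMultiplicity_pos hQ'0).mpr h2'
      rw [hQ'def, Polynomial.derivative_rootMultiplicity_of_root hroot] at this
      omega
  have hcount : 2 * D.card ≤ sF.card + n' := by
    have h1 : ∑ β ∈ D, Multiset.count β rts = n' := by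
      rw [hDdef, Multiset.toFinset_sum_count_eq, hrtscard]
    have h2 : sF.card
        = ∑ β ∈ D, (if Polynomial.rootMultiplicity β Q = 1 then 1 else 0) := by
      rw [hsFdef]
      exact Finset.card_filter _ _
    have h3 : ∀ β ∈ D, 2 ≤ (if Polynomial.rootMultiplicity β Q = 1 then 1 else 0)
        + Multiset.count β rts := by
      intro β hβ
      have hc : Multiset.count β rts = Polynomial.rootMultiplicity β Q := by
        rw [hrtsdef, Polynomial.count_roots]
      have hpos : 1 ≤ Multiset.count β rts :=
        Multiset.one_le_count_iff_mem.mpr (Multiset.mem_toFinset.mp hβ)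
      split_ifs with hone
      · omega
      · rw [hc] at hpos ⊢
        omega
    calc 2 * D.card = ∑ _β ∈ D, 2 := by rw [Finset.sum_const]; ring
      _ ≤ ∑ β ∈ D, ((if Polynomial.rootMultiplicity β Q = 1 then 1 else 0)
            + Multiset.count β rts) := Finset.sum_le_sum h3
      _ = sF.card + n' := by rw [Finset.sum_add_distrib, ← h2, h1]
  have harith : rP - 2 * k ≤ sF.card := by omega
  constructor
  · rw [hset_eq, Set.ncard_coe_finset]
    exact harith
  · -- power series lifts
    set fP : Polynomial (PowerSeries K) := P.map
      (((Polynomial.aeval (PowerSeries.C (R := K) α + PowerSeries.X) :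
          Polynomial C →ₐ[C] PowerSeries K)).toRingHom) with hfPdef
    have hfPQ : fP.map (PowerSeries.constantCoeff (R := K)) = Q := by
      rw [hfPdef, Polynomial.map_map, hQdef]
      congr 1
      apply Polynomial.ringHom_ext
      · intro a
        simp [PowerSeries.algebraMap_apply]
      · simp
    have hprop : ∀ β ∈ sF, Polynomial.eval β Q = 0
        ∧ Polynomial.eval β (Polynomial.derivative Q) ≠ 0 := by
      intro β hβ
      have : β ∈ (↑sF : Set K) := hβ
      rw [← hset_eq] at this
      exact this
    set L : K → PowerSeries K := fun β =>
      if h : Polynomial.eval β Q = 0 ∧ Polynomial.eval β (Polynomial.derivative Q) ≠ 0 then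
        Classical.choose (newton_lift fP β (by rw [hfPQ]; exact h.1)
          (by rw [hfPQ]; exact h.2))
      else 0 with hLdef
    have hLspec : ∀ β ∈ sF, PowerSeries.constantCoeff (R := K) (L β) = β ∧ fP.eval (L β) = 0 := by
      intro β hβ
      have h := hprop β hβ
      rw [hLdef]
      simp only [dif_pos h]
      exact Classical.choose_spec (newton_lift fP β (by rw [hfPQ]; exact h.1)
        (by rw [hfPQ]; exact h.2))
    set T : Finset (PowerSeries K) := sF.image L with hTdef
    have hTcard : T.card = sF.card := by
      rw [hTdef]
      apply Finset.card_image_of_injOn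
      intro β1 h1 β2 h2 heq
      have := (hLspec β1 h1).1
      rw [heq, (hLspec β2 h2).1] at this
      exact this.symm
    refine ⟨T, by omega, ?_⟩
    intro g hg
    rw [hTdef] at hg
    obtain ⟨β, hβ, rfl⟩ := Finset.mem_image.mp hg
    exact (hLspec β hβ).2
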